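/- A bridgeless planar cubic map is 4-face-colorable if and only if it admits a weak Hamiltonian. -/

import Mathlib

/-- A (finite, oriented) combinatorial map: a finite set of darts `D`, the
rotation `σ` giving the cyclic order of darts around each vertex, and the
fixed-point-free involution `α` exchanging the two darts of each edge.
Vertices are the cycles of `σ`, edges the cycles of `α`, and faces the cycles
of `σ * α`. -/
structure CombMap where
  D : Type
  [fintypeD : Fintype D]
  σ : Equiv.Perm D
  α : Equiv.Perm D
  α_invol : ∀ d, α (α d) = d
  α_ne : ∀ d, α d ≠ d

attribute [instance] CombMap.fintypeD

/-- The setoid on darts whose classes are the cycles of a permutation. -/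
def permSetoid {D : Type*} (f : Equiv.Perm D) : Setoid D :=
  ⟨f.SameCycle, ⟨fun _ => Equiv.Perm.SameCycle.refl f _,
    fun h => h.symm, fun h h' => h.trans h'⟩⟩

/-- The number of cycles (orbits) of a permutation. -/
noncomputable def numCycles {D : Type*} (f : Equiv.Perm D) : ℕ :=
  Nat.card (Quotient (permSetoid f))

namespace CombMap

variable (M : CombMap)

/-- The face permutation of a combinatorial map. -/
def φ : Equiv.Perm M.D := M.σ * M.α

/-- A combinatorial map is connected if any dart can be reached from any other
using `σ` and `α`. -/
def Connected : Prop :=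
  ∀ a b : M.D, Relation.EqvGen (fun x y => y = M.σ x ∨ y = M.α x) a b

/-- A combinatorial map is planar if it is connected and satisfies the Euler
relation `#vertices - #edges + #faces = 2` (genus 0). -/
def Planar : Prop :=
  M.Connected ∧ numCycles M.σ + numCycles M.φ = numCycles M.α + 2

/-- A combinatorial map is cubic if every vertex has exactly three darts. -/
def Cubic : Prop := ∀ d, M.σ (M.σ (M.σ d)) = d ∧ M.σ d ≠ d

/-- A connected plane map is bridgeless iff no edge has the same face on both
of its sides. -/
def Bridgeless : Prop := ∀ d, ¬ M.φ.SameCycle d (M.α d)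

/-- A proper face coloring with colors in `C`: a function on darts that is
constant on faces (cycles of `φ`) and takes different values on the two sides
of every edge. -/
def ProperFaceColoring {C : Type*} (Φ : M.D → C) : Prop :=
  (∀ d, Φ (M.φ d) = Φ d) ∧ ∀ d, Φ d ≠ Φ (M.α d)

/-- A map is 4-face-colorable if its faces admit a proper coloring by 4
colors. -/
def FourColorable : Prop := ∃ Φ : M.D → Fin 4, M.ProperFaceColoring Φ

/-- A set of darts closed under `α`, i.e. a set of edges. -/
def EdgeSet (S : Set M.D) : Prop := ∀ d, d ∈ S ↔ M.α d ∈ S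

/-- The darts at the same vertex as `d`. -/
def vertexDarts (d : M.D) : Set M.D := {e | M.σ.SameCycle d e}

/-- A 2-factor: a set of edges such that every vertex is incident to exactly
two of its darts. -/
def IsTwoFactorSet (S : Set M.D) : Prop :=
  M.EdgeSet S ∧ ∀ d, (M.vertexDarts d ∩ S).ncard = 2

/-- A weak Hamiltonian: a 2-factor all of whose cycles have even length,
i.e. the 2-factor admits a proper 2-coloring of its vertices (a union of
disjoint cycles is bipartite iff all its cycles are even). -/
def IsWeakHamSet (S : Set M.D) : Prop :=
  M.IsTwoFactorSet S ∧
  ∃ c : M.D → Bool, (∀ d, c (M.σ d) = c d) ∧ ∀ d ∈ S, c (M.α d) ≠ c d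

/-- A perfect matching contained in `S`: a set of edges of `S` with exactly
one dart at each vertex (on the cycles of a 2-factor `S`, this is a choice of
alternating edges on each cycle). -/
def IsMatchingSet (S F : Set M.D) : Prop :=
  F ⊆ S ∧ M.EdgeSet F ∧ ∀ d, (M.vertexDarts d ∩ F).ncard = 1

/-- `S'` is a mutation of the weak Hamiltonian `S`: the union of the
complementary perfect matching `Sᶜ` with a perfect matching chosen on the
cycles of `S`. -/
def MutationSet (S S' : Set M.D) : Prop :=
  ∃ F : Set M.D, M.IsMatchingSet S F ∧ S' = Sᶜ ∪ F

end CombMap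


section Helpers

variable {X : Type*}

/-- choose one element out of each orbit of a fixed-point-free involution -/
lemma exists_selector (ι : X → X) (hinv : ∀ x, ι (ι x) = x) (hne : ∀ x, ι x ≠ x) :
    ∃ A : Set X, ∀ x, x ∈ A ↔ ι x ∉ A := by
  classical
  let r := WellOrderingRel (α := X)
  have htri : ∀ a b : X, a ≠ b → (r a b ∨ r b a) := by
    intro a b hab
    rcases trichotomous_of r a b with h | h | h
    · exact Or.inl h
    · exact absurd h hab
    · exact Or.inr h
  have hasymm : ∀ a b : X, r a b → ¬ r b a := by
    intro a b h1 h2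
    exact (irrefl_of r a) (trans_of r h1 h2)
  refine ⟨{x | r x (ι x)}, fun x => ?_⟩
  simp only [Set.mem_setOf_eq, hinv]
  constructor
  · intro h h2
    exact hasymm _ _ h h2
  · intro h
    rcases htri x (ι x) (fun e => hne x e.symm) with h1 | h1
    · exact h1
    · exact absurd h1 h

lemma zpow_mem_three (f : Equiv.Perm X) (h3 : ∀ d, f (f (f d)) = d) (d : X) (n : ℤ) :
    (f ^ n) d = d ∨ (f ^ n) d = f d ∨ (f ^ n) d = f (f d) := by
  have hinv : ∀ e, f⁻¹ e = f (f e) := by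
    intro e
    have := h3 e
    calc f⁻¹ e = f⁻¹ (f (f (f e))) := by rw [h3]
    _ = f (f e) := by simp
  have hcomm : ∀ (n : ℤ) (x : X), (f ^ n) (f x) = f ((f ^ n) x) := by
    intro n x
    have h : f ^ n * f = f * f ^ n := by
      rw [← zpow_add_one, ← zpow_one_add, add_comm]
    calc (f ^ n) (f x) = (f ^ n * f) x := rfl
    _ = (f * f ^ n) x := by rw [h]
    _ = f ((f ^ n) x) := rfl
  have hcommi : ∀ (n : ℤ) (x : X), (f ^ n) (f⁻¹ x) = f⁻¹ ((f ^ n) x) := by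
    intro n x
    have := hcomm n (f⁻¹ x)
    simp at this
    calc (f ^ n) (f⁻¹ x) = f⁻¹ (f ((f ^ n) (f⁻¹ x))) := by simp
    _ = f⁻¹ ((f ^ n) x) := by rw [this]; rfl
  induction n using Int.induction_on with
  | zero => simp
  | succ k ih =>
      have : (f ^ ((k : ℤ) + 1)) d = f ((f ^ (k : ℤ)) d) := by
        rw [zpow_add, zpow_one, Equiv.Perm.mul_apply, hcomm]
      rw [this]
      rcases ih with h | h | h <;> rw [h]
      · tauto
      · tauto
      · exact Or.inl (h3 d)
  | pred k ih =>
      have : (f ^ ((-k : ℤ) - 1)) d = f⁻¹ ((f ^ (-k : ℤ)) d) := by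
        rw [sub_eq_add_neg, zpow_add, Equiv.Perm.mul_apply, zpow_neg_one, hcommi]
      rw [this]
      rcases ih with h | h | h <;> rw [h, hinv]
      · tauto
      · exact Or.inl (h3 d)
      · rw [h3]; tauto

lemma zpow_mem_two (f : Equiv.Perm X) (h2 : ∀ d, f (f d) = d) (d : X) (n : ℤ) :
    (f ^ n) d = d ∨ (f ^ n) d = f d := by
  have hinv : ∀ e, f⁻¹ e = f e := by
    intro e
    calc f⁻¹ e = f⁻¹ (f (f e)) := by rw [h2]
    _ = f e := by simp
  have hcomm : ∀ (n : ℤ) (x : X), (f ^ n) (f x) = f ((f ^ n) x) := by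
    intro n x
    have h : f ^ n * f = f * f ^ n := by
      rw [← zpow_add_one, ← zpow_one_add, add_comm]
    calc (f ^ n) (f x) = (f ^ n * f) x := rfl
    _ = (f * f ^ n) x := by rw [h]
    _ = f ((f ^ n) x) := rfl
  have hcommi : ∀ (n : ℤ) (x : X), (f ^ n) (f⁻¹ x) = f⁻¹ ((f ^ n) x) := by
    intro n x
    have := hcomm n (f⁻¹ x)
    simp at this
    calc (f ^ n) (f⁻¹ x) = f⁻¹ (f ((f ^ n) (f⁻¹ x))) := by simp
    _ = f⁻¹ ((f ^ n) x) := by rw [this]; rfl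
  induction n using Int.induction_on with
  | zero => simp
  | succ k ih =>
      have : (f ^ ((k : ℤ) + 1)) d = f ((f ^ (k : ℤ)) d) := by
        rw [zpow_add, zpow_one, Equiv.Perm.mul_apply, hcomm]
      rw [this]
      rcases ih with h | h <;> rw [h]
      · tauto
      · exact Or.inl (h2 d)
  | pred k ih =>
      have : (f ^ ((-k : ℤ) - 1)) d = f⁻¹ ((f ^ (-k : ℤ)) d) := by
        rw [sub_eq_add_neg, zpow_add, Equiv.Perm.mul_apply, zpow_neg_one, hcommi]
      rw [this]
      rcases ih with h | h <;> rw [h, hinv]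
      · tauto
      · rw [h2]; tauto

end Helpers
section BasicFacts

variable {M : CombMap}

lemma alpha_inj : Function.Injective M.α := M.α.injective

lemma sameCycle_alpha (d e : M.D) :
    M.α.SameCycle d e ↔ (e = d ∨ e = M.α d) := by
  constructor
  · rintro ⟨n, rfl⟩
    exact zpow_mem_two M.α M.α_invol d n
  · rintro (rfl | rfl)
    · exact ⟨0, rfl⟩
    · exact ⟨1, rfl⟩

section Cubic

variable (hC : M.Cubic)
include hC

lemma sigma3 (d : M.D) : M.σ (M.σ (M.σ d)) = d := (hC d).1

lemma sigma_ne (d : M.D) : M.σ d ≠ d := (hC d).2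

lemma sigma2_ne (d : M.D) : M.σ (M.σ d) ≠ d := by
  intro h
  have h2 := congrArg M.σ h
  rw [sigma3 hC] at h2
  exact sigma_ne hC d h2.symm

lemma sigma2_ne_sigma (d : M.D) : M.σ (M.σ d) ≠ M.σ d :=
  fun h => sigma_ne hC d (M.σ.injective h)

lemma sameCycle_sigma (d e : M.D) :
    M.σ.SameCycle d e ↔ (e = d ∨ e = M.σ d ∨ e = M.σ (M.σ d)) := by
  constructor
  · rintro ⟨n, rfl⟩
    exact zpow_mem_three M.σ (fun x => sigma3 hC x) d n
  · rintro (rfl | rfl | rfl)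
    · exact ⟨0, rfl⟩
    · exact ⟨1, rfl⟩
    · exact ⟨2, by rw [zpow_two, Equiv.Perm.mul_apply]⟩

lemma vertexDarts_eq (d : M.D) :
    M.vertexDarts d = {d, M.σ d, M.σ (M.σ d)} := by
  ext e
  simp only [CombMap.vertexDarts, Set.mem_setOf_eq, sameCycle_sigma hC,
    Set.mem_insert_iff, Set.mem_singleton_iff]

lemma phi_alpha (d : M.D) : M.φ (M.α d) = M.σ d := by
  simp [CombMap.φ, Equiv.Perm.mul_apply, M.α_invol]

lemma mem_vertex_self (d : M.D) : d = d ∨ d = M.σ d ∨ d = M.σ (M.σ d) := Or.inl rfl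

end Cubic

end BasicFacts
section Pattern

variable {M : CombMap}

/-- Exactly two of the three darts at the vertex of `d` are in `S`. -/
def exTwo (M : CombMap) (S : Set M.D) (d : M.D) : Prop :=
  (d ∈ S ∧ M.σ d ∈ S ∧ M.σ (M.σ d) ∉ S) ∨
  (d ∈ S ∧ M.σ d ∉ S ∧ M.σ (M.σ d) ∈ S) ∨
  (d ∉ S ∧ M.σ d ∈ S ∧ M.σ (M.σ d) ∈ S)

variable (hC : M.Cubic)
include hC

lemma ncard_vertex_inter {S : Set M.D} {d : M.D} (h : exTwo M S d) :
    (M.vertexDarts d ∩ S).ncard = 2 := by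
  have h1 := sigma_ne hC d
  have h2 := sigma2_ne hC d
  have h3 := sigma2_ne_sigma hC d
  rw [vertexDarts_eq hC]
  rcases h with ⟨ha, hb, hc⟩ | ⟨ha, hb, hc⟩ | ⟨ha, hb, hc⟩
  · have : ({d, M.σ d, M.σ (M.σ d)} : Set M.D) ∩ S = {d, M.σ d} := by
      ext x
      simp only [Set.mem_inter_iff, Set.mem_insert_iff, Set.mem_singleton_iff]
      constructor
      · rintro ⟨rfl | rfl | rfl, hx⟩ <;> tauto
      · rintro (rfl | rfl) <;> tauto
    rw [this, Set.ncard_pair (Ne.symm h1)]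
  · have : ({d, M.σ d, M.σ (M.σ d)} : Set M.D) ∩ S = {d, M.σ (M.σ d)} := by
      ext x
      simp only [Set.mem_inter_iff, Set.mem_insert_iff, Set.mem_singleton_iff]
      constructor
      · rintro ⟨rfl | rfl | rfl, hx⟩ <;> tauto
      · rintro (rfl | rfl) <;> tauto
    rw [this, Set.ncard_pair (Ne.symm h2)]
  · have : ({d, M.σ d, M.σ (M.σ d)} : Set M.D) ∩ S = {M.σ d, M.σ (M.σ d)} := by
      ext x
      simp only [Set.mem_inter_iff, Set.mem_insert_iff, Set.mem_singleton_iff]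
      constructor
      · rintro ⟨rfl | rfl | rfl, hx⟩ <;> tauto
      · rintro (rfl | rfl) <;> tauto
    rw [this, Set.ncard_pair (Ne.symm h3)]

lemma exTwo_of_ncard {S : Set M.D} {d : M.D}
    (h : (M.vertexDarts d ∩ S).ncard = 2) : exTwo M S d := by
  have h1 := sigma_ne hC d
  have h2 := sigma2_ne hC d
  have h3 := sigma2_ne_sigma hC d
  rw [vertexDarts_eq hC] at h
  by_cases ha : d ∈ S <;> by_cases hb : M.σ d ∈ S <;>
    by_cases hc : M.σ (M.σ d) ∈ S
  · exfalso
    have : ({d, M.σ d, M.σ (M.σ d)} : Set M.D) ∩ S = {d, M.σ d, M.σ (M.σ d)} := by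
      ext x
      simp only [Set.mem_inter_iff, Set.mem_insert_iff, Set.mem_singleton_iff]
      constructor
      · tauto
      · rintro (rfl | rfl | rfl) <;> tauto
    rw [this] at h
    rw [Set.ncard_insert_of_notMem (by simp [Ne.symm h1, Ne.symm h2]) (Set.toFinite _),
      Set.ncard_pair (Ne.symm h3)] at h
    omega
  · exact Or.inl ⟨ha, hb, hc⟩
  · exact Or.inr (Or.inl ⟨ha, hb, hc⟩)
  · exfalso
    have : ({d, M.σ d, M.σ (M.σ d)} : Set M.D) ∩ S = {d} := by
      ext x
      simp only [Set.mem_inter_iff, Set.mem_insert_iff, Set.mem_singleton_iff]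
      constructor
      · rintro ⟨rfl | rfl | rfl, hx⟩ <;> tauto
      · rintro rfl; tauto
    rw [this, Set.ncard_singleton] at h
    omega
  · exact Or.inr (Or.inr ⟨ha, hb, hc⟩)
  · exfalso
    have : ({d, M.σ d, M.σ (M.σ d)} : Set M.D) ∩ S = {M.σ d} := by
      ext x
      simp only [Set.mem_inter_iff, Set.mem_insert_iff, Set.mem_singleton_iff]
      constructor
      · rintro ⟨rfl | rfl | rfl, hx⟩ <;> tauto
      · rintro rfl; tauto
    rw [this, Set.ncard_singleton] at h
    omega
  · exfalso
    have : ({d, M.σ d, M.σ (M.σ d)} : Set M.D) ∩ S = {M.σ (M.σ d)} := by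
      ext x
      simp only [Set.mem_inter_iff, Set.mem_insert_iff, Set.mem_singleton_iff]
      constructor
      · rintro ⟨rfl | rfl | rfl, hx⟩ <;> tauto
      · rintro rfl; tauto
    rw [this, Set.ncard_singleton] at h
    omega
  · exfalso
    have : ({d, M.σ d, M.σ (M.σ d)} : Set M.D) ∩ S = ∅ := by
      ext x
      simp only [Set.mem_inter_iff, Set.mem_insert_iff, Set.mem_singleton_iff]
      constructor
      · rintro ⟨rfl | rfl | rfl, hx⟩ <;> tauto
      · rintro ⟨⟩
    rw [this, Set.ncard_empty] at h
    omega

/-- at a vertex with one dart in `S`, exactly one of the two other darts is in `S`. -/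
lemma htwo_of_exTwo {S : Set M.D} (hx : ∀ d, exTwo M S d) :
    ∀ d ∈ S, (M.σ d ∈ S ∧ M.σ (M.σ d) ∉ S) ∨ (M.σ d ∉ S ∧ M.σ (M.σ d) ∈ S) := by
  intro d hd
  rcases hx d with ⟨_, hb, hc⟩ | ⟨_, hb, hc⟩ | ⟨ha, _, _⟩
  · exact Or.inl ⟨hb, hc⟩
  · exact Or.inr ⟨hb, hc⟩
  · exact absurd hd ha

end Pattern
section Orientation

open Classical in
/-- the successor dart along the 2-factor `S` -/
noncomputable def nxt (M : CombMap) (S : Set M.D) (d : M.D) : M.D :=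
  if M.σ (M.α d) ∈ S then M.σ (M.α d) else M.σ (M.σ (M.α d))

variable {M : CombMap} {S : Set M.D}

lemma nxt_or (d : M.D) :
    nxt M S d = M.σ (M.α d) ∨ nxt M S d = M.σ (M.σ (M.α d)) := by
  unfold nxt; split <;> tauto

variable (hC : M.Cubic) (hE : M.EdgeSet S)
  (htwo : ∀ d ∈ S, (M.σ d ∈ S ∧ M.σ (M.σ d) ∉ S) ∨ (M.σ d ∉ S ∧ M.σ (M.σ d) ∈ S))

include hC in
lemma nxt_ne_alpha (d : M.D) : nxt M S d ≠ M.α d := by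
  rcases nxt_or (S := S) d with h | h <;> rw [h]
  · exact sigma_ne hC (M.α d)
  · exact sigma2_ne hC (M.α d)

include hE htwo in
lemma nxt_mem {d : M.D} (hd : d ∈ S) : nxt M S d ∈ S := by
  have hαd : M.α d ∈ S := (hE d).1 hd
  rcases htwo _ hαd with ⟨h1, _⟩ | ⟨h1, h2⟩ <;> unfold nxt
  · rw [if_pos h1]; exact h1
  · rw [if_neg h1]; exact h2

include hE htwo in
lemma nxt_uniq {d : M.D} (hd : d ∈ S) {e : M.D} (he : e ∈ S)
    (hor : e = M.σ (M.α d) ∨ e = M.σ (M.σ (M.α d))) : e = nxt M S d := by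
  have hαd : M.α d ∈ S := (hE d).1 hd
  rcases htwo _ hαd with ⟨h1, h2⟩ | ⟨h1, h2⟩ <;> unfold nxt
  · rw [if_pos h1]
    rcases hor with rfl | rfl
    · rfl
    · exact absurd he h2
  · rw [if_neg h1]
    rcases hor with rfl | rfl
    · exact absurd he h1
    · rfl

include hC hE htwo in
lemma nxt_nxt {d : M.D} (hd : d ∈ S) :
    nxt M S (M.α (nxt M S d)) = M.α d := by
  have hyS : nxt M S d ∈ S := nxt_mem hE htwo hd
  have hαy : M.α (nxt M S d) ∈ S := (hE _).1 hyS
  have hαd : M.α d ∈ S := (hE d).1 hd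
  refine (nxt_uniq hE htwo hαy hαd ?_).symm
  rw [M.α_invol]
  rcases nxt_or (S := S) d with h | h
  · right
    rw [h, sigma3 hC]
  · left
    rw [h, sigma3 hC]

/-- the permutation of the darts of `S` tracing out the cycles of `S` -/
noncomputable def psi (hC : M.Cubic) (hE : M.EdgeSet S)
    (htwo : ∀ d ∈ S, (M.σ d ∈ S ∧ M.σ (M.σ d) ∉ S) ∨ (M.σ d ∉ S ∧ M.σ (M.σ d) ∈ S)) :
    Equiv.Perm {x : M.D // x ∈ S} where
  toFun x := ⟨nxt M S x.1, nxt_mem hE htwo x.2⟩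
  invFun y := ⟨M.α (nxt M S (M.α y.1)),
    (hE _).1 (nxt_mem hE htwo ((hE y.1).1 y.2))⟩
  left_inv x := by
    apply Subtype.ext
    simp only
    rw [nxt_nxt hC hE htwo x.2, M.α_invol]
  right_inv y := by
    apply Subtype.ext
    simp only
    rw [nxt_nxt hC hE htwo ((hE y.1).1 y.2), M.α_invol]

/-- the lift of `α` to the darts of `S` -/
def AS (hE : M.EdgeSet S) : Equiv.Perm {x : M.D // x ∈ S} where
  toFun x := ⟨M.α x.1, (hE x.1).1 x.2⟩
  invFun x := ⟨M.α x.1, (hE x.1).1 x.2⟩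
  left_inv x := by apply Subtype.ext; simp only; rw [M.α_invol]
  right_inv x := by apply Subtype.ext; simp only; rw [M.α_invol]

lemma AS_AS (x : {x : M.D // x ∈ S}) : AS hE (AS hE x) = x := by
  apply Subtype.ext
  simp only [AS, Equiv.coe_fn_mk]
  rw [M.α_invol]

lemma AS_psi_AS (x : {x : M.D // x ∈ S}) :
    AS hE (psi hC hE htwo (AS hE x)) = (psi hC hE htwo)⁻¹ x := by
  apply Subtype.ext
  have h1 : (psi hC hE htwo)⁻¹ x = (psi hC hE htwo).symm x := rfl
  rw [h1]
  simp only [AS, psi, Equiv.coe_fn_mk, Equiv.coe_fn_symm_mk]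

include hC hE htwo in
lemma AS_psi_zpow (n : ℤ) (x : {x : M.D // x ∈ S}) :
    AS hE ((psi hC hE htwo ^ n) x) = (psi hC hE htwo ^ (-n)) (AS hE x) := by
  have hA2 : AS hE (S := S) * AS hE = 1 := Equiv.ext fun z => AS_AS hE z
  have hAinv : (AS hE (S := S))⁻¹ = AS hE := by rw [inv_eq_iff_mul_eq_one, hA2]
  have hconj : AS hE * psi hC hE htwo * (AS hE)⁻¹ = (psi hC hE htwo)⁻¹ := by
    rw [hAinv]
    exact Equiv.ext fun z => AS_psi_AS hC hE htwo z
  have hzpow : AS hE * (psi hC hE htwo) ^ n * (AS hE)⁻¹ = (psi hC hE htwo) ^ (-n) := by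
    have h := map_zpow (MulAut.conj (AS hE (S := S))) (psi hC hE htwo) n
    simp only [MulAut.conj_apply] at h
    rw [h, hconj, inv_zpow, zpow_neg]
  have h2 := congrFun (congrArg (fun (e : Equiv.Perm {x : M.D // x ∈ S}) =>
    (e : {x : M.D // x ∈ S} → {x : M.D // x ∈ S})) hzpow) (AS hE x)
  simp only [Equiv.Perm.coe_mul, Function.comp_apply, hAinv, AS_AS hE x] at h2
  exact h2

end Orientation
section SelectT

variable {M : CombMap} {S : Set M.D}

/-- existence of a coherent orientation choice `T` on the cycles of `S`:
one dart per edge of `S` and one dart per vertex of `S`, closed under `nxt`. -/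
lemma exists_T (hC : M.Cubic) (hE : M.EdgeSet S)
    (htwo : ∀ d ∈ S, (M.σ d ∈ S ∧ M.σ (M.σ d) ∉ S) ∨ (M.σ d ∉ S ∧ M.σ (M.σ d) ∈ S)) :
    ∃ T : Set M.D,
      (∀ d ∈ T, d ∈ S) ∧
      (∀ d ∈ S, (d ∈ T ↔ M.α d ∉ T)) ∧
      (∀ d ∈ S, (d ∈ T ↔ nxt M S d ∈ T)) ∧
      (∀ d ∈ S, (d ∈ T ↔ nxt M S (M.α d) ∉ T)) := by
  classical
  set ψ := psi hC hE htwo with hψ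
  set Qs := Quotient (permSetoid ψ) with hQs
  have hmapwd : ∀ (a b : {x : M.D // x ∈ S}), (permSetoid ψ).r a b →
      (permSetoid ψ).r (AS hE a) (AS hE b) := by
    rintro a b ⟨n, hn⟩
    exact ⟨-n, by rw [← AS_psi_zpow hC hE htwo n a, hn]⟩
  set ι : Qs → Qs := Quotient.map (AS hE) hmapwd with hι
  have hι_mk : ∀ x, ι (Quotient.mk (permSetoid ψ) x) =
      Quotient.mk (permSetoid ψ) (AS hE x) := fun x => rfl
  have hinv : ∀ q, ι (ι q) = q := by
    intro q
    induction q using Quotient.ind with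
    | _ x => rw [hι_mk, hι_mk, AS_AS hE]
  have hne : ∀ q, ι q ≠ q := by
    intro q
    induction q using Quotient.ind with
    | _ x =>
      rw [hι_mk]
      intro hq
      obtain ⟨n, hn⟩ : (permSetoid ψ).r (AS hE x) x := Quotient.exact hq
      -- hn : (ψ ^ n) (AS hE x) = x
      have key : (ψ ^ n) (AS hE x) = AS hE (AS hE x) := by rw [hn, AS_AS hE]
      set y := AS hE x with hy
      -- (ψ ^ n) y = AS hE y
      rcases Int.even_or_odd n with ⟨m, hm⟩ | ⟨m, hm⟩
      · -- n = m + m ; z := ψ^m y is a fixed point of AS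
        have hz : AS hE ((ψ ^ m) y) = (ψ ^ m) y := by
          rw [AS_psi_zpow hC hE htwo m y, ← key, ← Equiv.Perm.mul_apply, ← zpow_add]
          have hexp : -m + n = m := by omega
          rw [hexp]
        exact M.α_ne ((ψ ^ m) y).1 (congrArg Subtype.val hz)
      · -- n = 2m + 1 ; z := ψ^m y has ψ z = AS z, i.e. nxt z = α z
        have hz : AS hE ((ψ ^ (m + 1)) y) = (ψ ^ m) y := by
          rw [AS_psi_zpow hC hE htwo (m + 1) y, ← key, ← Equiv.Perm.mul_apply, ← zpow_add]
          have hexp : -(m + 1) + n = m := by omega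
          rw [hexp]
        have hz2 : (ψ ^ (m + 1)) y = AS hE ((ψ ^ m) y) := by
          rw [← hz, AS_AS hE]
        have hz3 : ψ ((ψ ^ m) y) = AS hE ((ψ ^ m) y) := by
          rw [← hz2, ← Equiv.Perm.mul_apply, ← zpow_one_add]
          have hexp : 1 + m = m + 1 := by omega
          rw [hexp]
        exact nxt_ne_alpha hC ((ψ ^ m) y).1 (congrArg Subtype.val hz3)
  obtain ⟨A, hA⟩ := exists_selector ι hinv hne
  refine ⟨{d : M.D | ∃ h : d ∈ S, Quotient.mk (permSetoid ψ) ⟨d, h⟩ ∈ A}, ?_, ?_, ?_, ?_⟩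
  · rintro d ⟨h, _⟩
    exact h
  · intro d hd
    have hαd : M.α d ∈ S := (hE d).1 hd
    have hAS : (⟨M.α d, hαd⟩ : {x : M.D // x ∈ S}) = AS hE ⟨d, hd⟩ := rfl
    constructor
    · rintro ⟨h1, h2⟩ ⟨h3, h4⟩
      have heq : Quotient.mk (permSetoid ψ) (⟨M.α d, h3⟩ : {x : M.D // x ∈ S}) =
          ι (Quotient.mk (permSetoid ψ) ⟨d, hd⟩) := by
        rw [hι_mk]
        exact congrArg (Quotient.mk (permSetoid ψ)) hAS
      rw [heq] at h4
      have h2' : Quotient.mk (permSetoid ψ) (⟨d, hd⟩ : {x : M.D // x ∈ S}) ∈ A := h2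
      exact (hA _).mp h2' h4
    · intro h
      refine ⟨hd, ?_⟩
      by_contra hcon
      apply h
      refine ⟨hαd, ?_⟩
      have heq : Quotient.mk (permSetoid ψ) (⟨M.α d, hαd⟩ : {x : M.D // x ∈ S}) =
          ι (Quotient.mk (permSetoid ψ) ⟨d, hd⟩) := by
        rw [hι_mk]
        exact congrArg (Quotient.mk (permSetoid ψ)) hAS
      rw [heq]
      have h5 := hA (ι (Quotient.mk (permSetoid ψ) ⟨d, hd⟩))
      rw [hinv] at h5
      exact h5.mpr hcon
  · intro d hd
    have hnm : nxt M S d ∈ S := nxt_mem hE htwo hd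
    have hpsi : (⟨nxt M S d, hnm⟩ : {x : M.D // x ∈ S}) = ψ ⟨d, hd⟩ := rfl
    have hsc : Quotient.mk (permSetoid ψ) (ψ (⟨d, hd⟩ : {x : M.D // x ∈ S})) =
        Quotient.mk (permSetoid ψ) (⟨d, hd⟩ : {x : M.D // x ∈ S}) := by
      apply Quotient.sound
      exact ⟨-1, by simp⟩
    constructor
    · rintro ⟨h1, h2⟩
      exact ⟨hnm, by rw [hpsi, hsc]; exact h2⟩
    · rintro ⟨h1, h2⟩
      refine ⟨hd, ?_⟩
      rw [hpsi, hsc] at h2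
      exact h2
  · intro d hd
    have hαd : M.α d ∈ S := (hE d).1 hd
    have hnm : nxt M S (M.α d) ∈ S := nxt_mem hE htwo hαd
    have hpsi : (⟨nxt M S (M.α d), hnm⟩ : {x : M.D // x ∈ S}) =
        ψ (AS hE ⟨d, hd⟩) := rfl
    have hsc : Quotient.mk (permSetoid ψ) (ψ (AS hE (⟨d, hd⟩ : {x : M.D // x ∈ S}))) =
        ι (Quotient.mk (permSetoid ψ) ⟨d, hd⟩) := by
      rw [hι_mk]
      apply Quotient.sound
      exact ⟨-1, by simp⟩
    constructor
    · rintro ⟨h1, h2⟩ ⟨h3, h4⟩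
      have h4' : Quotient.mk (permSetoid ψ) (⟨nxt M S (M.α d), hnm⟩ :
          {x : M.D // x ∈ S}) ∈ A := h4
      rw [hpsi, hsc] at h4'
      exact (hA _).mp h2 h4'
    · intro h
      refine ⟨hd, ?_⟩
      by_contra hcon
      apply h
      refine ⟨hnm, ?_⟩
      rw [hpsi, hsc]
      have h5 := hA (ι (Quotient.mk (permSetoid ψ) ⟨d, hd⟩))
      rw [hinv] at h5
      exact h5.mpr hcon

end SelectT
section ZtwoFacts

lemma z2_add_eq_zero : ∀ a b : ZMod 2 × ZMod 2, a + b = 0 → a = b := by decide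

lemma z2_tele : ∀ a b c : ZMod 2 × ZMod 2, (a + b) + (b + c) + (c + a) = 0 := by decide

lemma z2_dist : ∀ x y z : ZMod 2 × ZMod 2, x + y + z = 0 → x ≠ 0 → y ≠ 0 → z ≠ 0 →
    (y ≠ x ∧ z ≠ x ∧ z ≠ y) := by decide

lemma z2_patt : ∀ x y z : ZMod 2 × ZMod 2, x + y + z = 0 → x ≠ 0 → y ≠ 0 → z ≠ 0 →
    ((x.1 = 1 ∧ y.1 = 1 ∧ ¬ z.1 = 1) ∨ (x.1 = 1 ∧ ¬ y.1 = 1 ∧ z.1 = 1) ∨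
      (¬ x.1 = 1 ∧ y.1 = 1 ∧ z.1 = 1)) := by decide

lemma z2_snd : ∀ u v : ZMod 2 × ZMod 2, u.1 = 1 → v.1 = 1 → u ≠ v →
    (u.2 = 1 ↔ ¬ v.2 = 1) := by decide

lemma g4_inj : Function.Injective
    (![((0 : ZMod 2), (0 : ZMod 2)), (0, 1), (1, 0), (1, 1)] : Fin 4 → ZMod 2 × ZMod 2) := by
  decide

lemma bool_flip {a b : Bool} (h : (a = true) ↔ ¬ (b = true)) : a ≠ b := by
  cases a <;> cases b <;> simp_all

lemma bool_eq_of_iff {a b : Bool} (h : (a = true) ↔ (b = true)) : a = b := by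
  cases a <;> cases b <;> simp_all

lemma if_true_iff {P : Prop} [Decidable P] : (if P then true else false) = true ↔ P := by
  split <;> simp_all

end ZtwoFacts

section Forward

variable {M : CombMap}

set_option maxHeartbeats 1000000 in
lemma forward_dir (hC : M.Cubic) (h4 : M.FourColorable) :
    ∃ S : Set M.D, M.IsWeakHamSet S := by
  classical
  obtain ⟨Φ, hface, hedge⟩ := h4
  set g : Fin 4 → ZMod 2 × ZMod 2 := ![(0, 0), (0, 1), (1, 0), (1, 1)] with hg
  set Ψ : M.D → ZMod 2 × ZMod 2 := fun d => g (Φ d) with hΨdef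
  have hΨface : ∀ d, Ψ (M.φ d) = Ψ d := fun d => congrArg g (hface d)
  have hΨα : ∀ d, Ψ d ≠ Ψ (M.α d) := fun d h => hedge d (g4_inj h)
  have hσ : ∀ d, Ψ (M.σ d) = Ψ (M.α d) := by
    intro d
    rw [← phi_alpha hC d, hΨface (M.α d)]
  set diff : M.D → ZMod 2 × ZMod 2 := fun d => Ψ d + Ψ (M.α d) with hdiff
  have hdne : ∀ d, diff d ≠ 0 := fun d h => hΨα d (z2_add_eq_zero _ _ h)
  have hdα : ∀ d, diff (M.α d) = diff d := by
    intro d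
    show Ψ (M.α d) + Ψ (M.α (M.α d)) = Ψ d + Ψ (M.α d)
    rw [M.α_invol, add_comm]
  have hdσ : ∀ d, diff d = Ψ d + Ψ (M.σ d) := by
    intro d
    show Ψ d + Ψ (M.α d) = Ψ d + Ψ (M.σ d)
    rw [hσ]
  have hsum : ∀ d, diff d + diff (M.σ d) + diff (M.σ (M.σ d)) = 0 := by
    intro d
    rw [hdσ d, hdσ (M.σ d), hdσ (M.σ (M.σ d)), sigma3 hC d]
    exact z2_tele _ _ _
  have hdist : ∀ d, diff (M.σ d) ≠ diff d ∧ diff (M.σ (M.σ d)) ≠ diff d ∧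
      diff (M.σ (M.σ d)) ≠ diff (M.σ d) :=
    fun d => z2_dist _ _ _ (hsum d) (hdne d) (hdne (M.σ d)) (hdne (M.σ (M.σ d)))
  set S : Set M.D := {d | (diff d).1 = 1} with hS
  have hmemS : ∀ d, d ∈ S ↔ (diff d).1 = 1 := fun d => Iff.rfl
  have hSE : M.EdgeSet S := by
    intro d
    rw [hmemS, hmemS, hdα]
  have hpatt : ∀ d, exTwo M S d := by
    intro d
    rcases z2_patt _ _ _ (hsum d) (hdne d) (hdne (M.σ d)) (hdne (M.σ (M.σ d))) with
      ⟨h1, h2, h3⟩ | ⟨h1, h2, h3⟩ | ⟨h1, h2, h3⟩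
    · exact Or.inl ⟨h1, h2, h3⟩
    · exact Or.inr (Or.inl ⟨h1, h2, h3⟩)
    · exact Or.inr (Or.inr ⟨h1, h2, h3⟩)
  have htwo := htwo_of_exTwo hC hpatt
  obtain ⟨T, hT0, hT1, hT3, hT2⟩ := exists_T hC hSE htwo
  -- membership in S of darts in T
  have hTS : ∀ d ∈ T, d ∈ S := hT0
  -- the other S-dart at the vertex of a
  have hother : ∀ a ∈ S, ∀ b ∈ S, (b = M.σ a ∨ b = M.σ (M.σ a)) →
      b = nxt M S (M.α a) := by
    intro a ha b hb hor
    have hαa : M.α a ∈ S := (hSE a).1 ha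
    refine nxt_uniq hSE htwo hαa hb ?_
    rw [M.α_invol]
    exact hor
  -- uniqueness of the T-dart at a vertex
  have hTvert : ∀ e1 e2, M.σ.SameCycle e1 e2 → e1 ∈ T → e2 ∈ T → e1 = e2 := by
    intro e1 e2 hsc h1 h2
    by_contra hne
    have he2 : e2 = M.σ e1 ∨ e2 = M.σ (M.σ e1) := by
      rcases (sameCycle_sigma hC e1 e2).mp hsc with h | h | h
      · exact absurd h.symm hne
      · exact Or.inl h
      · exact Or.inr h
    have he2' : e2 = nxt M S (M.α e1) := hother e1 (hT0 _ h1) e2 (hT0 _ h2) he2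
    have := (hT2 e1 (hT0 _ h1)).mp h1
    rw [← he2'] at this
    exact this h2
  -- existence of a T-dart at each vertex
  have hTex : ∀ d, ∃ e, M.σ.SameCycle d e ∧ e ∈ T := by
    intro d
    rcases hpatt d with ⟨h1, h2, h3⟩ | ⟨h1, h2, h3⟩ | ⟨h1, h2, h3⟩
    · -- d, σ d ∈ S
      have hnx : M.σ d = nxt M S (M.α d) := hother d h1 (M.σ d) h2 (Or.inl rfl)
      by_cases hdT : d ∈ T
      · exact ⟨d, Equiv.Perm.SameCycle.refl _ _, hdT⟩
      · refine ⟨M.σ d, ⟨1, rfl⟩, ?_⟩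
        by_contra hcon
        rw [hnx] at hcon
        exact hdT ((hT2 d h1).mpr hcon)
    · -- d, σ² d ∈ S
      have hnx : M.σ (M.σ d) = nxt M S (M.α d) :=
        hother d h1 (M.σ (M.σ d)) h3 (Or.inr rfl)
      by_cases hdT : d ∈ T
      · exact ⟨d, Equiv.Perm.SameCycle.refl _ _, hdT⟩
      · refine ⟨M.σ (M.σ d), ⟨2, by rw [zpow_two, Equiv.Perm.mul_apply]⟩, ?_⟩
        by_contra hcon
        rw [hnx] at hcon
        exact hdT ((hT2 d h1).mpr hcon)
    · -- σ d, σ² d ∈ S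
      have hnx : M.σ (M.σ d) = nxt M S (M.α (M.σ d)) := by
        refine hother (M.σ d) h2 (M.σ (M.σ d)) h3 (Or.inl rfl)
      by_cases hdT : M.σ d ∈ T
      · exact ⟨M.σ d, ⟨1, rfl⟩, hdT⟩
      · refine ⟨M.σ (M.σ d), ⟨2, by rw [zpow_two, Equiv.Perm.mul_apply]⟩, ?_⟩
        by_contra hcon
        rw [hnx] at hcon
        exact hdT ((hT2 (M.σ d) h2).mpr hcon)
  set c : M.D → Bool := fun d =>
    if (∃ e, M.σ.SameCycle d e ∧ e ∈ T ∧ (diff e).2 = 1) then true else false with hc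
  have hcval : ∀ d e, M.σ.SameCycle d e → e ∈ T → (c d = true ↔ (diff e).2 = 1) := by
    intro d e hsc heT
    have hciff : c d = true ↔ (∃ e', M.σ.SameCycle d e' ∧ e' ∈ T ∧ (diff e').2 = 1) := by
      simp only [hc]
      exact if_true_iff
    rw [hciff]
    constructor
    · rintro ⟨e', hsc', hT', hd'⟩
      have : e' = e := hTvert e' e (hsc'.symm.trans hsc) hT' heT
      rw [← this]
      exact hd'
    · intro h
      exact ⟨e, hsc, heT, h⟩
  have hcconst : ∀ d, c (M.σ d) = c d := by
    intro d
    obtain ⟨e, hsc, heT⟩ := hTex d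
    have h1 := hcval d e hsc heT
    have h2 := hcval (M.σ d) e ((Equiv.Perm.SameCycle.symm ⟨1, rfl⟩).trans hsc) heT
    rw [← h1] at h2
    exact bool_eq_of_iff h2
  have hcflip : ∀ d ∈ S, c (M.α d) ≠ c d := by
    intro d hdS
    have hαdS : M.α d ∈ S := (hSE d).1 hdS
    by_cases hdT : d ∈ T
    · set y := nxt M S d with hy
      have hyS : y ∈ S := nxt_mem hSE htwo hdS
      have hyT : y ∈ T := (hT3 d hdS).mp hdT
      have hyv : y = M.σ (M.α d) ∨ y = M.σ (M.σ (M.α d)) := nxt_or d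
      have hsc : M.σ.SameCycle (M.α d) y := by
        rcases hyv with h | h
        · exact ⟨1, h.symm⟩
        · exact ⟨2, by simp [zpow_two]; exact h.symm⟩
      have h1 := hcval (M.α d) y hsc hyT
      have h2 := hcval d d (Equiv.Perm.SameCycle.refl _ _) hdT
      have hne : diff y ≠ diff d := by
        rw [← hdα d]
        rcases hyv with h | h
        · rw [h]; exact (hdist (M.α d)).1
        · rw [h]; exact (hdist (M.α d)).2.1
      have hiff := z2_snd (diff y) (diff d) (hyS) (hdS) hne
      apply bool_flip
      rw [h1, h2]
      exact hiff
    · have hαdT : M.α d ∈ T := by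
        by_contra hcon
        exact hdT ((hT1 d hdS).mpr hcon)
      set y := nxt M S (M.α d) with hy
      have hyS : y ∈ S := nxt_mem hSE htwo hαdS
      have hyT : y ∈ T := by
        by_contra hcon
        exact hdT ((hT2 d hdS).mpr hcon)
      have hyv : y = M.σ d ∨ y = M.σ (M.σ d) := by
        rcases nxt_or (S := S) (M.α d) with h | h
        · rw [M.α_invol] at h; exact Or.inl h
        · rw [M.α_invol] at h; exact Or.inr h
      have hsc : M.σ.SameCycle d y := by
        rcases hyv with h | h
        · exact ⟨1, h.symm⟩
        · exact ⟨2, by simp [zpow_two]; exact h.symm⟩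
      have h1 := hcval d y hsc hyT
      have h2 := hcval (M.α d) (M.α d) (Equiv.Perm.SameCycle.refl _ _) hαdT
      have hne : diff y ≠ diff (M.α d) := by
        rw [hdα d]
        rcases hyv with h | h
        · rw [h]; exact (hdist d).1
        · rw [h]; exact (hdist d).2.1
      have hiff := z2_snd (diff y) (diff (M.α d)) (hyS) (hαdS) hne
      refine Ne.symm (bool_flip ?_)
      rw [h1, h2]
      exact hiff
  exact ⟨S, ⟨⟨hSE, fun d => ncard_vertex_inter hC (hpatt d)⟩, c, hcconst, hcflip⟩⟩

end Forward
section Homology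

lemma z2_solve : ∀ a b c : ZMod 2, a + b = c → b = a + c := by decide

lemma z2_self : ∀ a : ZMod 2, a + a = 0 := by decide

lemma z2_abc : ∀ u v w : ZMod 2, u + w = (u + v) + (v + w) := by decide

lemma z2_eq_of_add_zero : ∀ a b : ZMod 2, a + b = 0 → a = b := by decide

lemma z2_tele3 : ∀ a b c : ZMod 2, (a + b) + (b + c) + (c + a) = 0 := by decide

variable (M : CombMap)

/-- vertex class of a dart -/
def mkV (d : M.D) : Quotient (permSetoid M.σ) := Quotient.mk _ d
/-- edge class of a dart -/
def mkE (d : M.D) : Quotient (permSetoid M.α) := Quotient.mk _ d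
/-- face class of a dart -/
def mkF (d : M.D) : Quotient (permSetoid M.φ) := Quotient.mk _ d

variable {M}

lemma mkV_eq_iff {d e : M.D} : mkV M d = mkV M e ↔ M.σ.SameCycle d e :=
  ⟨Quotient.exact, Quot.sound⟩

lemma mkE_eq_iff {d e : M.D} : mkE M d = mkE M e ↔ M.α.SameCycle d e :=
  ⟨Quotient.exact, Quot.sound⟩

lemma mkF_eq_iff {d e : M.D} : mkF M d = mkF M e ↔ M.φ.SameCycle d e :=
  ⟨Quotient.exact, Quot.sound⟩

lemma mkF_alpha_sigma (d : M.D) : mkF M (M.α d) = mkF M (M.σ d) := by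
  rw [mkF_eq_iff]
  exact ⟨1, by simp [CombMap.φ, Equiv.Perm.mul_apply, M.α_invol]⟩

lemma mkF_phi (d : M.D) : mkF M (M.φ d) = mkF M d := by
  rw [mkF_eq_iff]
  exact ⟨-1, by simp⟩

lemma mkV_sigma (d : M.D) : mkV M (M.σ d) = mkV M d := by
  rw [mkV_eq_iff]
  exact ⟨-1, by simp⟩

noncomputable instance : Fintype (Quotient (permSetoid M.σ)) :=
  @Fintype.ofFinite _ (Quotient.finite _)

noncomputable instance : Fintype (Quotient (permSetoid M.α)) :=
  @Fintype.ofFinite _ (Quotient.finite _)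

noncomputable instance : Fintype (Quotient (permSetoid M.φ)) :=
  @Fintype.ofFinite _ (Quotient.finite _)

lemma finrank_quot_fun (f : Equiv.Perm M.D) :
    Module.finrank (ZMod 2) (Quotient (permSetoid f) → ZMod 2) = numCycles f := by
  have : Fintype (Quotient (permSetoid f)) := @Fintype.ofFinite _ (Quotient.finite _)
  rw [Module.finrank_fintype_fun_eq_card, ← Nat.card_eq_fintype_card]
  rfl

variable (M)

/-- the coboundary map from faces to edges -/
noncomputable def dOne :
    (Quotient (permSetoid M.φ) → ZMod 2) →ₗ[ZMod 2]
      (Quotient (permSetoid M.α) → ZMod 2) where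
  toFun y := Quotient.lift (fun d => y (mkF M d) + y (mkF M (M.α d)))
    (by
      intro a b hab
      rcases (sameCycle_alpha a b).mp hab with rfl | rfl
      · rfl
      · simp only [M.α_invol]
        rw [add_comm])
  map_add' y z := by
    funext q
    induction q using Quotient.ind with
    | _ d =>
      show (y + z) (mkF M d) + (y + z) (mkF M (M.α d)) =
        (y (mkF M d) + y (mkF M (M.α d))) + (z (mkF M d) + z (mkF M (M.α d)))
      simp only [Pi.add_apply]
      ring
  map_smul' r y := by
    funext q
    induction q using Quotient.ind with
    | _ d =>
      show (r • y) (mkF M d) + (r • y) (mkF M (M.α d)) =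
        r • (y (mkF M d) + y (mkF M (M.α d)))
      simp only [Pi.smul_apply, smul_eq_mul]
      ring

/-- the boundary map from edges to vertices -/
noncomputable def dTwo (hC : M.Cubic) :
    (Quotient (permSetoid M.α) → ZMod 2) →ₗ[ZMod 2]
      (Quotient (permSetoid M.σ) → ZMod 2) where
  toFun x := Quotient.lift
    (fun d => x (mkE M d) + x (mkE M (M.σ d)) + x (mkE M (M.σ (M.σ d))))
    (by
      intro a b hab
      rcases (sameCycle_sigma hC a b).mp hab with rfl | rfl | rfl
      · rfl
      · simp only [sigma3 hC]
        ring
      · simp only [sigma3 hC]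
        ring)
  map_add' y z := by
    funext q
    induction q using Quotient.ind with
    | _ d =>
      show (y + z) (mkE M d) + (y + z) (mkE M (M.σ d)) + (y + z) (mkE M (M.σ (M.σ d))) = _
      simp only [Pi.add_apply]
      show _ = (y (mkE M d) + y (mkE M (M.σ d)) + y (mkE M (M.σ (M.σ d)))) +
        (z (mkE M d) + z (mkE M (M.σ d)) + z (mkE M (M.σ (M.σ d))))
      ring
  map_smul' r y := by
    funext q
    induction q using Quotient.ind with
    | _ d =>
      show (r • y) (mkE M d) + (r • y) (mkE M (M.σ d)) + (r • y) (mkE M (M.σ (M.σ d))) = _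
      simp only [Pi.smul_apply, smul_eq_mul]
      show _ = r • (y (mkE M d) + y (mkE M (M.σ d)) + y (mkE M (M.σ (M.σ d))))
      simp only [smul_eq_mul]
      ring

/-- summing a function over all vertices -/
noncomputable def sumVmap :
    (Quotient (permSetoid M.σ) → ZMod 2) →ₗ[ZMod 2] ZMod 2 where
  toFun y := ∑ v, y v
  map_add' y z := by
    simp only [Pi.add_apply]
    rw [Finset.sum_add_distrib]
  map_smul' r y := by
    simp only [Pi.smul_apply, smul_eq_mul, RingHom.id_apply]
    rw [Finset.mul_sum]

variable {M}

lemma dOne_apply (y : Quotient (permSetoid M.φ) → ZMod 2) (d : M.D) :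
    dOne M y (mkE M d) = y (mkF M d) + y (mkF M (M.α d)) := rfl

lemma dTwo_apply (hC : M.Cubic) (x : Quotient (permSetoid M.α) → ZMod 2) (d : M.D) :
    dTwo M hC x (mkV M d) =
      x (mkE M d) + x (mkE M (M.σ d)) + x (mkE M (M.σ (M.σ d))) := rfl

lemma range_dOne_le_ker_dTwo (hC : M.Cubic) :
    LinearMap.range (dOne M) ≤ LinearMap.ker (dTwo M hC) := by
  rintro x ⟨y, rfl⟩
  rw [LinearMap.mem_ker]
  funext q
  induction q using Quotient.ind with
  | _ d =>
    show dTwo M hC (dOne M y) (mkV M d) = 0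
    rw [dTwo_apply hC, dOne_apply, dOne_apply, dOne_apply]
    rw [mkF_alpha_sigma d, mkF_alpha_sigma (M.σ d), mkF_alpha_sigma (M.σ (M.σ d)),
      sigma3 hC d]
    exact z2_tele3 _ _ _
end Homology
section Homology2

lemma if_or_disj (p q : Prop) [Decidable p] [Decidable q] (h : ¬(p ∧ q)) :
    (if p ∨ q then (1 : ZMod 2) else 0) = (if p then 1 else 0) + (if q then 1 else 0) := by
  by_cases hp : p <;> by_cases hq : q <;> simp_all

lemma if_or3 (p q r : Prop) [Decidable p] [Decidable q] [Decidable r]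
    (hpq : ¬(p ∧ q)) (hpr : ¬(p ∧ r)) (hqr : ¬(q ∧ r)) :
    (if p ∨ q ∨ r then (1 : ZMod 2) else 0) =
      (if p then 1 else 0) + (if q then 1 else 0) + (if r then 1 else 0) := by
  by_cases hp : p <;> by_cases hq : q <;> by_cases hr : r <;> simp_all

variable {M : CombMap}

lemma mkE_eq_iff' {x a : M.D} : mkE M x = mkE M a ↔ (x = a ∨ x = M.α a) := by
  rw [mkE_eq_iff, sameCycle_alpha]
  constructor
  · rintro (rfl | rfl)
    · exact Or.inl rfl
    · exact Or.inr (by rw [M.α_invol])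
  · rintro (rfl | rfl)
    · exact Or.inl rfl
    · exact Or.inr (by rw [M.α_invol])

lemma mkV_eq_iff' (hC : M.Cubic) {d a : M.D} :
    mkV M d = mkV M a ↔ (d = a ∨ M.σ d = a ∨ M.σ (M.σ d) = a) := by
  rw [mkV_eq_iff, sameCycle_sigma hC]
  constructor
  · rintro (rfl | rfl | rfl)
    · exact Or.inl rfl
    · exact Or.inr (Or.inl rfl)
    · exact Or.inr (Or.inr rfl)
  · rintro (rfl | rfl | rfl)
    · exact Or.inl rfl
    · exact Or.inr (Or.inl rfl)
    · exact Or.inr (Or.inr rfl)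

open Classical in
lemma dTwo_single (hC : M.Cubic) (a : M.D) :
    dTwo M hC (Pi.single (mkE M a) 1) =
      Pi.single (mkV M a) 1 + Pi.single (mkV M (M.α a)) 1 := by
  funext q
  induction q using Quotient.ind with
  | _ d =>
    have hq : (Quotient.mk (permSetoid M.σ) d) = mkV M d := rfl
    rw [hq]
    show dTwo M hC (Pi.single (mkE M a) 1) (mkV M d) = _
    rw [dTwo_apply hC]
    have hterm : ∀ x : M.D, (Pi.single (mkE M a) 1 :
        Quotient (permSetoid M.α) → ZMod 2) (mkE M x) =
        if (x = a ∨ x = M.α a) then 1 else 0 := by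
      intro x
      rw [Pi.single_apply]
      exact if_congr mkE_eq_iff' rfl rfl
    rw [hterm, hterm, hterm]
    have hrhs : ((Pi.single (mkV M a) 1 + Pi.single (mkV M (M.α a)) 1 :
        Quotient (permSetoid M.σ) → ZMod 2)) (mkV M d) =
        (if (d = a ∨ M.σ d = a ∨ M.σ (M.σ d) = a) then (1 : ZMod 2) else 0) +
        (if (d = M.α a ∨ M.σ d = M.α a ∨ M.σ (M.σ d) = M.α a) then 1 else 0) := by
      simp only [Pi.add_apply, Pi.single_apply]
      rw [if_congr (mkV_eq_iff' hC) rfl rfl, if_congr (mkV_eq_iff' hC) rfl rfl]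
    rw [hrhs]
    have hd01 : d ≠ M.σ d := (sigma_ne hC d).symm
    have hd02 : d ≠ M.σ (M.σ d) := (sigma2_ne hC d).symm
    have hd12 : M.σ d ≠ M.σ (M.σ d) := (sigma2_ne_sigma hC d).symm
    have hab : a ≠ M.α a := (M.α_ne a).symm
    have hne : ∀ x : M.D, ¬(x = a ∧ x = M.α a) := by
      rintro x ⟨rfl, h2⟩
      exact hab h2
    rw [if_or_disj _ _ (hne d), if_or_disj _ _ (hne (M.σ d)),
      if_or_disj _ _ (hne (M.σ (M.σ d)))]
    have hx : ∀ b : M.D, ¬(d = b ∧ M.σ d = b) ∧ ¬(d = b ∧ M.σ (M.σ d) = b) ∧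
        ¬(M.σ d = b ∧ M.σ (M.σ d) = b) := by
      intro b
      refine ⟨?_, ?_, ?_⟩
      · rintro ⟨rfl, h⟩; exact hd01 h.symm
      · rintro ⟨rfl, h⟩; exact hd02 h.symm
      · rintro ⟨h1, h2⟩; exact hd12 (h1.trans h2.symm)
    rw [if_or3 _ _ _ (hx a).1 (hx a).2.1 (hx a).2.2,
      if_or3 _ _ _ (hx (M.α a)).1 (hx (M.α a)).2.1 (hx (M.α a)).2.2]
    ring

lemma pi_single_smul' {I : Type*} [DecidableEq I] (i : I) (c : ZMod 2) :
    (Pi.single i c : I → ZMod 2) = c • (Pi.single i 1 : I → ZMod 2) := by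
  funext j
  simp only [Pi.smul_apply, Pi.single_apply, smul_eq_mul]
  split <;> ring

lemma fun_add_self {I : Type*} (y : I → ZMod 2) : y + y = 0 := by
  funext j
  exact z2_self (y j)

open Classical in
lemma range_dTwo_eq_ker_sumV (hC : M.Cubic) (hconn : M.Connected) (d0 : M.D) :
    LinearMap.range (dTwo M hC) = LinearMap.ker (sumVmap M) := by
  have hgen : ∀ a b : M.D,
      (Pi.single (mkV M a) 1 + Pi.single (mkV M b) 1 :
        Quotient (permSetoid M.σ) → ZMod 2) ∈
        LinearMap.range (dTwo M hC) := by
    intro a b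
    induction hconn a b with
    | rel x y h =>
      rcases h with h | h
      · have : mkV M y = mkV M x := by rw [h, mkV_sigma]
        rw [this, fun_add_self]
        exact zero_mem _
      · subst h
        exact ⟨Pi.single (mkE M x) 1, (dTwo_single hC x).symm ▸ (dTwo_single hC x)⟩
    | refl x =>
      rw [fun_add_self]
      exact zero_mem _
    | symm x y _ ih =>
      rw [add_comm]
      exact ih
    | trans x y z _ _ ih1 ih2 =>
      have key : (Pi.single (mkV M x) 1 + Pi.single (mkV M z) 1 :
          Quotient (permSetoid M.σ) → ZMod 2) =
          (Pi.single (mkV M x) 1 + Pi.single (mkV M y) 1) +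
          (Pi.single (mkV M y) 1 + Pi.single (mkV M z) 1) := by
        funext q
        simp only [Pi.add_apply]
        exact z2_abc _ _ _
      rw [key]
      exact add_mem ih1 ih2
  -- forward inclusion via sums of singles
  apply le_antisymm
  · rintro x ⟨w, rfl⟩
    rw [LinearMap.mem_ker]
    have hw : w = ∑ q : Quotient (permSetoid M.α),
        (w q) • (Pi.single q 1 : Quotient (permSetoid M.α) → ZMod 2) := by
      conv_lhs => rw [← Finset.univ_sum_single w]
      refine Finset.sum_congr rfl ?_
      intro q _
      exact pi_single_smul' q (w q)
    rw [hw, map_sum, map_sum]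
    refine Finset.sum_eq_zero ?_
    intro q _
    obtain ⟨a, rfl⟩ := Quotient.exists_rep q
    have hq : (Quotient.mk (permSetoid M.α) a) = mkE M a := rfl
    rw [hq, LinearMap.map_smul, LinearMap.map_smul, dTwo_single hC a, smul_eq_mul]
    have : sumVmap M ((Pi.single (mkV M a) 1 + Pi.single (mkV M (M.α a)) 1 :
        Quotient (permSetoid M.σ) → ZMod 2)) = 0 := by
      rw [map_add]
      show (∑ v, (Pi.single (mkV M a) 1 : Quotient (permSetoid M.σ) → ZMod 2) v) +
        (∑ v, (Pi.single (mkV M (M.α a)) 1 : Quotient (permSetoid M.σ) → ZMod 2) v) = 0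
      rw [Finset.sum_eq_single_of_mem (mkV M a) (Finset.mem_univ _)
        (fun b _ hb => Pi.single_eq_of_ne hb 1),
        Finset.sum_eq_single_of_mem (mkV M (M.α a)) (Finset.mem_univ _)
        (fun b _ hb => Pi.single_eq_of_ne hb 1)]
      simp only [Pi.single_eq_same]
      exact z2_self 1
    rw [this, mul_zero]
  · intro y hy
    rw [LinearMap.mem_ker] at hy
    have hy' : ∑ v, y v = 0 := hy
    have hrep : y = ∑ q : Quotient (permSetoid M.σ),
        (y q) • ((Pi.single q 1 : Quotient (permSetoid M.σ) → ZMod 2) +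
          Pi.single (mkV M d0) 1) := by
      have expand : ∀ q : Quotient (permSetoid M.σ),
          (y q) • ((Pi.single q 1 : Quotient (permSetoid M.σ) → ZMod 2) +
            Pi.single (mkV M d0) 1) =
          (y q) • (Pi.single q 1 : Quotient (permSetoid M.σ) → ZMod 2) +
            (y q) • (Pi.single (mkV M d0) 1 : Quotient (permSetoid M.σ) → ZMod 2) := by
        intro q
        rw [smul_add]
      rw [Finset.sum_congr rfl (fun q _ => expand q), Finset.sum_add_distrib,
        ← Finset.sum_smul, hy', zero_smul, add_zero]
      conv_lhs => rw [← Finset.univ_sum_single y]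
      refine Finset.sum_congr rfl ?_
      intro q _
      exact pi_single_smul' q (y q)
    rw [hrep]
    refine Submodule.sum_mem _ ?_
    intro q _
    obtain ⟨a, rfl⟩ := Quotient.exists_rep q
    exact Submodule.smul_mem _ _ (hgen a d0)

/-- the constant functions on faces -/
noncomputable def constF (M : CombMap) :
    ZMod 2 →ₗ[ZMod 2] (Quotient (permSetoid M.φ) → ZMod 2) where
  toFun c := fun _ => c
  map_add' c c' := rfl
  map_smul' c c' := rfl

lemma ker_dOne_eq_range_constF (hconn : M.Connected) (d0 : M.D) :
    LinearMap.ker (dOne M) = LinearMap.range (constF M) := by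
  apply le_antisymm
  · intro y hy
    rw [LinearMap.mem_ker] at hy
    have hflat : ∀ d : M.D, y (mkF M d) + y (mkF M (M.α d)) = 0 := by
      intro d
      have := congrFun hy (mkE M d)
      rw [dOne_apply] at this
      exact this
    have hα : ∀ d, y (mkF M d) = y (mkF M (M.α d)) :=
      fun d => z2_eq_of_add_zero _ _ (hflat d)
    have hσ : ∀ d, y (mkF M (M.σ d)) = y (mkF M d) := by
      intro d
      rw [← mkF_alpha_sigma d, ← hα d]
    have hconst : ∀ a b : M.D, y (mkF M a) = y (mkF M b) := by
      intro a b
      induction hconn a b with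
      | rel x z h =>
        rcases h with h | h
        · rw [h, hσ]
        · rw [h, ← hα]
      | refl x => rfl
      | symm x z _ ih => exact ih.symm
      | trans x z w _ _ ih1 ih2 => exact ih1.trans ih2
    refine ⟨y (mkF M d0), ?_⟩
    funext q
    induction q using Quotient.ind with
    | _ d =>
      show y (mkF M d0) = y (mkF M d)
      exact hconst d0 d
  · rintro y ⟨c, rfl⟩
    rw [LinearMap.mem_ker]
    funext q
    induction q using Quotient.ind with
    | _ d =>
      show dOne M (constF M c) (mkE M d) = 0
      rw [dOne_apply]
      show c + c = 0
      exact z2_self c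

end Homology2
section Homology3

variable {M : CombMap}

lemma nonempty_D (hP : M.Planar) : Nonempty M.D := by
  rcases isEmpty_or_nonempty M.D with h | h
  · exfalso
    have hq : ∀ f : Equiv.Perm M.D, numCycles f = 0 := by
      intro f
      have : IsEmpty (Quotient (permSetoid f)) :=
        ⟨fun q => Quotient.inductionOn q (fun d => (h.false d).elim)⟩
      exact Nat.card_of_isEmpty
    have heuler := hP.2
    rw [hq M.σ, hq M.φ, hq M.α] at heuler
    omega
  · exact h

lemma range_dOne_eq_ker_dTwo (hC : M.Cubic) (hP : M.Planar) :
    LinearMap.range (dOne M) = LinearMap.ker (dTwo M hC) := by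
  classical
  obtain ⟨d0⟩ := nonempty_D hP
  have hrr2 := LinearMap.finrank_range_add_finrank_ker (dTwo M hC)
  have hrr1 := LinearMap.finrank_range_add_finrank_ker (dOne M)
  have hrrS := LinearMap.finrank_range_add_finrank_ker (sumVmap M)
  rw [finrank_quot_fun M.α] at hrr2
  rw [finrank_quot_fun M.φ] at hrr1
  rw [finrank_quot_fun M.σ] at hrrS
  have hsurj : LinearMap.range (sumVmap M) = ⊤ := by
    rw [LinearMap.range_eq_top]
    intro c
    refine ⟨(Pi.single (mkV M d0) c : Quotient (permSetoid M.σ) → ZMod 2), ?_⟩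
    show ∑ v, (Pi.single (mkV M d0) c : Quotient (permSetoid M.σ) → ZMod 2) v = c
    rw [Finset.sum_pi_single']
    rw [if_pos (Finset.mem_univ _)]
  have hrs1 : Module.finrank (ZMod 2) (LinearMap.range (sumVmap M)) = 1 := by
    rw [hsurj, finrank_top, Module.finrank_self]
  have hkd1 : Module.finrank (ZMod 2) (LinearMap.ker (dOne M)) = 1 := by
    rw [ker_dOne_eq_range_constF hP.1 d0]
    have hinj : Function.Injective (constF M) := by
      intro c c' h
      exact congrFun h (mkF M d0)
    rw [LinearMap.finrank_range_of_inj hinj, Module.finrank_self]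
  have hr2k : Module.finrank (ZMod 2) (LinearMap.range (dTwo M hC)) =
      Module.finrank (ZMod 2) (LinearMap.ker (sumVmap M)) := by
    rw [range_dTwo_eq_ker_sumV hC hP.1 d0]
  have heuler := hP.2
  apply Submodule.eq_of_le_of_finrank_le (range_dOne_le_ker_dTwo hC)
  omega

open Classical in
lemma exists_potential (hC : M.Cubic) (hP : M.Planar) {S0 : Set M.D}
    (hE0 : M.EdgeSet S0)
    (heven : ∀ d, ((if d ∈ S0 then (1 : ZMod 2) else 0) +
      (if M.σ d ∈ S0 then 1 else 0) + (if M.σ (M.σ d) ∈ S0 then 1 else 0)) = 0) :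
    ∃ ε : M.D → ZMod 2, (∀ d, ε (M.φ d) = ε d) ∧
      ∀ d, ε (M.α d) = ε d + (if d ∈ S0 then 1 else 0) := by
  set xS : Quotient (permSetoid M.α) → ZMod 2 := Quotient.lift
    (fun d => if d ∈ S0 then (1 : ZMod 2) else 0)
    (by
      intro a b hab
      rcases (sameCycle_alpha a b).mp hab with rfl | rfl
      · rfl
      · have : a ∈ S0 ↔ M.α a ∈ S0 := hE0 a
        by_cases h : a ∈ S0
        · rw [if_pos h, if_pos (this.mp h)]
        · rw [if_neg h, if_neg (fun hh => h (this.mpr hh))]) with hxS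
  have hxk : xS ∈ LinearMap.ker (dTwo M hC) := by
    rw [LinearMap.mem_ker]
    funext q
    induction q using Quotient.ind with
    | _ d =>
      show dTwo M hC xS (mkV M d) = 0
      rw [dTwo_apply hC]
      have hv : ∀ e : M.D, xS (mkE M e) = if e ∈ S0 then 1 else 0 := fun e => rfl
      rw [hv, hv, hv]
      exact heven d
  rw [← range_dOne_eq_ker_dTwo hC hP] at hxk
  obtain ⟨y, hy⟩ := hxk
  refine ⟨fun d => y (mkF M d), ?_, ?_⟩
  · intro d
    show y (mkF M (M.φ d)) = y (mkF M d)
    rw [mkF_phi]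
  · intro d
    show y (mkF M (M.α d)) = y (mkF M d) + _
    have := congrFun hy (mkE M d)
    rw [dOne_apply] at this
    have hxv : xS (mkE M d) = if d ∈ S0 then 1 else 0 := rfl
    rw [hxv] at this
    exact z2_solve _ _ _ this

end Homology3
section Backward

lemma bool_ne_iff {x y : Bool} (h : x ≠ y) : (x = true ↔ ¬ y = true) := by
  cases x <;> cases y <;> simp_all

lemma z2_ne_add_one : ∀ a : ZMod 2, a ≠ a + 1 := by decide

def z2ToFin4 (p : ZMod 2 × ZMod 2) : Fin 4 :=
  ⟨p.1.val + 2 * p.2.val, by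
    have h1 : p.1.val < 2 := ZMod.val_lt p.1
    have h2 : p.2.val < 2 := ZMod.val_lt p.2
    omega⟩

lemma z2ToFin4_inj : Function.Injective z2ToFin4 := by decide

variable {M : CombMap}

set_option maxHeartbeats 1000000 in
lemma backward_dir (hC : M.Cubic) (hP : M.Planar)
    (h : ∃ S : Set M.D, M.IsWeakHamSet S) : M.FourColorable := by
  classical
  obtain ⟨S, ⟨hE, h2⟩, c, hcσ, hcflip⟩ := h
  have hpatt : ∀ d, exTwo M S d := fun d => exTwo_of_ncard hC (h2 d)
  have htwo := htwo_of_exTwo hC hpatt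
  obtain ⟨T, hT0, hT1, hT3, hT2⟩ := exists_T hC hE htwo
  set F : Set M.D := {d | (d ∈ T ∧ c d = true) ∨ (M.α d ∈ T ∧ c (M.α d) = true)}
    with hF
  have hFmem : ∀ d, d ∈ F ↔
      ((d ∈ T ∧ c d = true) ∨ (M.α d ∈ T ∧ c (M.α d) = true)) := fun d => Iff.rfl
  have hFS : ∀ d ∈ F, d ∈ S := by
    intro d hd
    rcases (hFmem d).mp hd with ⟨h1, _⟩ | ⟨h1, _⟩
    · exact hT0 d h1
    · exact (hE d).2 (hT0 _ h1)
  have hcσ2 : ∀ d, c (M.σ (M.σ d)) = c d := fun d => (hcσ (M.σ d)).trans (hcσ d)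
  have hother : ∀ a ∈ S, ∀ b ∈ S, (b = M.σ a ∨ b = M.σ (M.σ a)) →
      b = nxt M S (M.α a) := by
    intro a ha b hb hor
    refine nxt_uniq hE htwo ((hE a).1 ha) hb ?_
    rw [M.α_invol]
    exact hor
  have hcnxt : ∀ a ∈ S, c (nxt M S (M.α a)) = c a := by
    intro a ha
    rcases nxt_or (S := S) (M.α a) with h | h <;> rw [h, M.α_invol]
    · exact hcσ a
    · exact hcσ2 a
  have hFone : ∀ a ∈ S, (a ∈ F ↔ nxt M S (M.α a) ∉ F) := by
    intro a ha
    have hbS : nxt M S (M.α a) ∈ S := nxt_mem hE htwo ((hE a).1 ha)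
    have hcb : c (nxt M S (M.α a)) = c a := hcnxt a ha
    by_cases haT : a ∈ T
    · have hαaT : M.α a ∉ T := (hT1 a ha).mp haT
      have hbT : nxt M S (M.α a) ∉ T := (hT2 a ha).mp haT
      have hαbT : M.α (nxt M S (M.α a)) ∈ T := by
        by_contra hcon
        exact hbT ((hT1 _ hbS).mpr hcon)
      have haF : a ∈ F ↔ c a = true := by
        rw [hFmem]
        constructor
        · rintro (⟨_, hh⟩ | ⟨hh, _⟩)
          · exact hh
          · exact absurd hh hαaT
        · intro hh
          exact Or.inl ⟨haT, hh⟩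
      have hbF : nxt M S (M.α a) ∈ F ↔ c (M.α (nxt M S (M.α a))) = true := by
        rw [hFmem]
        constructor
        · rintro (⟨hh, _⟩ | ⟨_, hh⟩)
          · exact absurd hh hbT
          · exact hh
        · intro hh
          exact Or.inr ⟨hαbT, hh⟩
      have hflip : c (M.α (nxt M S (M.α a))) ≠ c (nxt M S (M.α a)) := hcflip _ hbS
      rw [hcb] at hflip
      rw [haF, hbF]
      exact bool_ne_iff hflip.symm
    · have hαaT : M.α a ∈ T := by
        by_contra hcon
        exact haT ((hT1 a ha).mpr hcon)
      have hbT : nxt M S (M.α a) ∈ T := by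
        by_contra hcon
        exact haT ((hT2 a ha).mpr hcon)
      have hαbT : M.α (nxt M S (M.α a)) ∉ T := (hT1 _ hbS).mp hbT
      have haF : a ∈ F ↔ c (M.α a) = true := by
        rw [hFmem]
        constructor
        · rintro (⟨hh, _⟩ | ⟨_, hh⟩)
          · exact absurd hh haT
          · exact hh
        · intro hh
          exact Or.inr ⟨hαaT, hh⟩
      have hbF : nxt M S (M.α a) ∈ F ↔ c (nxt M S (M.α a)) = true := by
        rw [hFmem]
        constructor
        · rintro (⟨_, hh⟩ | ⟨hh, _⟩)
          · exact hh
          · exact absurd hh hαbT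
        · intro hh
          exact Or.inl ⟨hbT, hh⟩
      have hflip : c (M.α a) ≠ c a := hcflip a ha
      rw [haF, hbF, hcb]
      exact bool_ne_iff hflip
  set S' : Set M.D := Sᶜ ∪ F with hS'
  have hS'mem : ∀ d, d ∈ S' ↔ (d ∉ S ∨ d ∈ F) := by
    intro d
    rw [hS']
    simp [Set.mem_union, Set.mem_compl_iff]
  have hFE : ∀ d, d ∈ F ↔ M.α d ∈ F := by
    intro d
    rw [hFmem, hFmem, M.α_invol]
    tauto
  have hE' : M.EdgeSet S' := by
    intro d
    rw [hS'mem, hS'mem, ← hFE d]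
    have := hE d
    tauto
  have hevenS : ∀ d, ((if d ∈ S then (1 : ZMod 2) else 0) +
      (if M.σ d ∈ S then 1 else 0) + (if M.σ (M.σ d) ∈ S then 1 else 0)) = 0 := by
    intro d
    rcases hpatt d with ⟨ha, hb, hc'⟩ | ⟨ha, hb, hc'⟩ | ⟨ha, hb, hc'⟩
    · rw [if_pos ha, if_pos hb, if_neg hc']
      decide
    · rw [if_pos ha, if_neg hb, if_pos hc']
      decide
    · rw [if_neg ha, if_pos hb, if_pos hc']
      decide
  have hevenS' : ∀ d, ((@ite (ZMod 2) (d ∈ S') (Classical.propDecidable _) 1 0) +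
      (@ite (ZMod 2) (M.σ d ∈ S') (Classical.propDecidable _) 1 0) +
      (@ite (ZMod 2) (M.σ (M.σ d) ∈ S') (Classical.propDecidable _) 1 0)) = 0 := by
    intro d
    rcases hpatt d with ⟨ha, hb, hc'⟩ | ⟨ha, hb, hc'⟩ | ⟨ha, hb, hc'⟩
    · -- d, σ d ∈ S; σ² d ∉ S
      have hbnxt : M.σ d = nxt M S (M.α d) := hother d ha (M.σ d) hb (Or.inl rfl)
      have hone := hFone d ha
      rw [← hbnxt] at hone
      have h3 : M.σ (M.σ d) ∈ S' := (hS'mem _).mpr (Or.inl hc')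
      rw [if_pos h3]
      by_cases hdF : d ∈ F
      · have hsdF : M.σ d ∉ F := hone.mp hdF
        have hns : M.σ d ∉ S' := by
          intro hcon
          rcases (hS'mem _).mp hcon with h | h
          · exact h hb
          · exact hsdF h
        rw [if_pos ((hS'mem d).mpr (Or.inr hdF)), if_neg hns]
        decide
      · have hsdF : M.σ d ∈ F := by
          by_contra hcon
          exact hdF (hone.mpr hcon)
        have hns : d ∉ S' := by
          intro hcon
          rcases (hS'mem _).mp hcon with h | h
          · exact h ha
          · exact hdF h
        rw [if_neg hns, if_pos ((hS'mem _).mpr (Or.inr hsdF))]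
        decide
    · -- d, σ² d ∈ S; σ d ∉ S
      have hbnxt : M.σ (M.σ d) = nxt M S (M.α d) :=
        hother d ha (M.σ (M.σ d)) hc' (Or.inr rfl)
      have hone := hFone d ha
      rw [← hbnxt] at hone
      have h3 : M.σ d ∈ S' := (hS'mem _).mpr (Or.inl hb)
      rw [if_pos h3]
      by_cases hdF : d ∈ F
      · have hsdF : M.σ (M.σ d) ∉ F := hone.mp hdF
        have hns : M.σ (M.σ d) ∉ S' := by
          intro hcon
          rcases (hS'mem _).mp hcon with h | h
          · exact h hc'
          · exact hsdF h
        rw [if_pos ((hS'mem d).mpr (Or.inr hdF)), if_neg hns]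
        decide
      · have hsdF : M.σ (M.σ d) ∈ F := by
          by_contra hcon
          exact hdF (hone.mpr hcon)
        have hns : d ∉ S' := by
          intro hcon
          rcases (hS'mem _).mp hcon with h | h
          · exact h ha
          · exact hdF h
        rw [if_neg hns, if_pos ((hS'mem _).mpr (Or.inr hsdF))]
        decide
    · -- σ d, σ² d ∈ S; d ∉ S
      have hbnxt : M.σ (M.σ d) = nxt M S (M.α (M.σ d)) :=
        hother (M.σ d) hb (M.σ (M.σ d)) hc' (Or.inl rfl)
      have hone := hFone (M.σ d) hb
      rw [← hbnxt] at hone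
      have h3 : d ∈ S' := (hS'mem _).mpr (Or.inl ha)
      rw [if_pos h3]
      by_cases hdF : M.σ d ∈ F
      · have hsdF : M.σ (M.σ d) ∉ F := hone.mp hdF
        have hns : M.σ (M.σ d) ∉ S' := by
          intro hcon
          rcases (hS'mem _).mp hcon with h | h
          · exact h hc'
          · exact hsdF h
        rw [if_pos ((hS'mem _).mpr (Or.inr hdF)), if_neg hns]
        decide
      · have hsdF : M.σ (M.σ d) ∈ F := by
          by_contra hcon
          exact hdF (hone.mpr hcon)
        have hns : M.σ d ∉ S' := by
          intro hcon
          rcases (hS'mem _).mp hcon with h | h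
          · exact h hb
          · exact hdF h
        rw [if_neg hns, if_pos ((hS'mem _).mpr (Or.inr hsdF))]
        decide
  obtain ⟨ε1, hε1f, hε1α⟩ := exists_potential hC hP hE hevenS
  obtain ⟨ε2, hε2f, hε2α⟩ := exists_potential hC hP hE' hevenS'
  refine ⟨fun d => z2ToFin4 (ε1 d, ε2 d), fun d => ?_, fun d => ?_⟩
  · show z2ToFin4 (ε1 (M.φ d), ε2 (M.φ d)) = z2ToFin4 (ε1 d, ε2 d)
    rw [hε1f, hε2f]
  · intro hcontra
    have hpair := z2ToFin4_inj hcontra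
    have hfst : ε1 d = ε1 (M.α d) := congrArg Prod.fst hpair
    have hsnd : ε2 d = ε2 (M.α d) := congrArg Prod.snd hpair
    by_cases hdS : d ∈ S
    · have := hε1α d
      rw [if_pos hdS] at this
      rw [this] at hfst
      exact z2_ne_add_one (ε1 d) hfst
    · have hdS' : d ∈ S' := (hS'mem d).mpr (Or.inl hdS)
      have := hε2α d
      rw [if_pos hdS'] at this
      rw [this] at hsnd
      exact z2_ne_add_one (ε2 d) hsnd

end Backward

/-- A bridgeless planar cubic map is 4-face-colorable if and only if it admits
a weak Hamiltonian. -/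
theorem fourColorable_iff_weakHam (M : CombMap) (hP : M.Planar)
    (hB : M.Bridgeless) (hC : M.Cubic) :
    M.FourColorable ↔ ∃ S : Set M.D, M.IsWeakHamSet S :=
  ⟨forward_dir hC, backward_dir hC hP⟩
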